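/- Let (∂, σ) be a right twisted multi-derivation on A in which σ is a diagonal matrix with diagonal entries σ₁, …, σ_n that are algebra automorphisms of A, so that each ∂_i satisfies ∂_i(ab) = ∂_i(a)σ_i(b) + a∂_i(b); then (∂, σ) is free with σ̄ = diag(σ₁⁻¹, …, σ_n⁻¹) and σ̂ = σ. If in addition there exist scalars q_i ∈ k with σ_i⁻¹ ∘ ∂_i ∘ σ_i = q_i ∂_i (each ∂_i is a q_i-skew derivation), then the unique hom-connection ∇ on A with respect to the induced calculus Ω¹(A) = A^n_σ satisfying ∇(ξ_i) = 0 is given by ∇(f) = Σ_i q_i ∂_i(f(ω_i)). -/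

import Mathlib

/-!
# Statement 10

The diagonal case: if `(∂, σ)` is a right twisted multi-derivation with `σ` the
diagonal matrix of algebra automorphisms `σ₁, …, σ_n` (so each `∂_i` satisfies
`∂_i(ab) = ∂_i(a)σ_i(b) + a∂_i(b)`), then `(∂, σ)` is free with
`σ̄ = diag(σ₁⁻¹, …, σ_n⁻¹)` and `σ̂ = σ`.  If moreover each `∂_i` is a `q_i`-skew
derivation (`σ_i⁻¹ ∘ ∂_i ∘ σ_i = q_i ∂_i`), then the unique hom-connection `∇`
on `A` with `∇(ξ_i) = 0` is `∇(f) = Σ_i q_i ∂_i(f(ω_i))`.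
-/

namespace Stmt10

variable {k A : Type*} [Field k] [Ring A] [Algebra k A] {n : ℕ}

/-- The freeness conditions for `(σ, σ̄, σ̂)`. -/
def IsFreePair (σ σbar σhat : A →ₐ[k] Matrix (Fin n) (Fin n) A) : Prop :=
  (∀ (i j : Fin n) (a : A),
      (∑ l, σbar (σ a j l) i l) = if i = j then a else 0) ∧
  (∀ (i j : Fin n) (a : A),
      (∑ l, σ (σbar a l j) l i) = if i = j then a else 0) ∧
  (∀ (i j : Fin n) (a : A),
      (∑ l, σhat (σbar a j l) i l) = if i = j then a else 0) ∧
  (∀ (i j : Fin n) (a : A),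
      (∑ l, σbar (σhat a l j) l i) = if i = j then a else 0)

/-- The diagonal algebra map `A → M_n(A)` associated with a family of algebra
automorphisms of `A`. -/
def diagAlg (s : Fin n → (A ≃ₐ[k] A)) : A →ₐ[k] Matrix (Fin n) (Fin n) A where
  toFun a := Matrix.diagonal fun i => s i a
  map_one' := by
    simp only [map_one]
    exact Matrix.diagonal_one
  map_mul' a b := by
    show Matrix.diagonal (fun i => s i (a * b))
        = Matrix.diagonal (fun i => s i a) * Matrix.diagonal (fun i => s i b)
    rw [Matrix.diagonal_mul_diagonal]
    exact congrArg _ (funext fun i => map_mul (s i) a b)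
  map_zero' := by
    simp only [map_zero]
    exact Matrix.diagonal_zero
  map_add' a b := by
    show Matrix.diagonal (fun i => s i (a + b))
        = Matrix.diagonal (fun i => s i a) + Matrix.diagonal (fun i => s i b)
    rw [Matrix.diagonal_add]
    exact congrArg _ (funext fun i => map_add (s i) a b)
  commutes' c := by
    show Matrix.diagonal (fun i => s i (algebraMap k A c)) = _
    have h : (fun i : Fin n => s i (algebraMap k A c)) = algebraMap k (Fin n → A) c := by
      funext i; simp [Pi.algebraMap_apply]
    rw [h, Matrix.algebraMap_eq_diagonal]

variable (s : Fin n → (A ≃ₐ[k] A))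

/-- Right `A`-action on `Ω¹(A) = A^n_σ` for diagonal `σ`. -/
def ract (x : Fin n → A) (a : A) : Fin n → A := fun i => ∑ j, x j * diagAlg s a j i

/-- Left multiplication on `Ω¹(A)` (coordinatewise). -/
def lmulPi (a : A) : (Fin n → A) →ₗ[k] (Fin n → A) where
  toFun x := fun i => a * x i
  map_add' x y := by funext i; simp [mul_add]
  map_smul' c x := by funext i; simp [mul_smul_comm]

/-- `Hom_A(Ω¹(A), A)`: right `A`-linear maps. -/
def homD : Submodule k ((Fin n → A) →ₗ[k] A) where
  carrier := {f | ∀ (x : Fin n → A) (a : A), f (ract s x a) = f x * a}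
  add_mem' {f g} hf hg := by
    intro x a
    simp only [LinearMap.add_apply, hf x a, hg x a, add_mul]
  zero_mem' := by intro x a; simp
  smul_mem' c f hf := by
    intro x a
    simp only [LinearMap.smul_apply, hf x a, smul_mul_assoc]

/-- The left basis `ω_i` of `Ω¹(A)`. -/
def om (i : Fin n) : Fin n → A := Pi.single i 1

lemma ract_lmulPi (a c : A) (x : Fin n → A) :
    ract s (lmulPi (k := k) a x) c = lmulPi (k := k) a (ract s x c) := by
  funext i
  simp [ract, lmulPi, Finset.mul_sum, mul_assoc]

/-- The right action of `a : A` on `f ∈ Hom_A(Ω¹(A), A)`. -/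
def rAct (f : homD s) (a : A) : homD s :=
  ⟨f.1 ∘ₗ lmulPi a, by
    intro x c
    simp only [LinearMap.comp_apply]
    rw [← ract_lmulPi, f.2 _ c]⟩

/-- `d : A → Ω¹(A)` in coordinates. -/
def dvec (del : Fin n → (A →ₗ[k] A)) (a : A) : Fin n → A := fun i => del i a

/-- Hom-connection property with vanishing on the dual basis. -/
def IsHomConnVanishing (del : Fin n → (A →ₗ[k] A)) (ξ : Fin n → homD s)
    (nabla : homD s →ₗ[k] A) : Prop :=
  (∀ (f : homD s) (a : A),
      nabla (rAct s f a) = nabla f * a + f.1 (dvec del a)) ∧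
  (∀ i, nabla (ξ i) = 0)

section Aux

variable {k A : Type*} [Field k] [Ring A] [Algebra k A] {n : ℕ}
variable (s : Fin n → (A ≃ₐ[k] A))

lemma diagAlg_apply (a : A) (i j : Fin n) :
    diagAlg s a i j = if i = j then s i a else 0 := by
  simp [diagAlg, Matrix.diagonal_apply]

lemma ract_apply (x : Fin n → A) (a : A) (i : Fin n) :
    ract s x a i = x i * s i a := by
  simp [ract, diagAlg_apply, Finset.sum_ite_eq, mul_ite]

lemma ract_om (a : A) (i : Fin n) :
    ract s (om i) a = Pi.single i (s i a) := by
  funext j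
  rcases eq_or_ne j i with rfl | h
  · simp [ract_apply, om]
  · simp [ract_apply, om, Pi.single_eq_of_ne h]

lemma repr_lemma (f : homD s) (x : Fin n → A) :
    f.1 x = ∑ i, f.1 (om i) * (s i).symm (x i) := by
  have hx : x = ∑ i, ract s (om i) ((s i).symm (x i)) := by
    funext j
    rw [Finset.sum_apply]
    have : ∀ i, ract s (om i) ((s i).symm (x i)) j
        = (Pi.single i (x i) : Fin n → A) j := by
      intro i; rw [ract_om]; simp
    simp_rw [this]
    simp [Finset.sum_pi_single]
  calc f.1 x = f.1 (∑ i, ract s (om i) ((s i).symm (x i))) := by rw [← hx]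
    _ = ∑ i, f.1 (ract s (om i) ((s i).symm (x i))) := map_sum _ _ _
    _ = ∑ i, f.1 (om i) * (s i).symm (x i) := by
        refine Finset.sum_congr rfl fun i _ => ?_
        exact f.2 (om i) ((s i).symm (x i))

lemma rAct_om (f : homD s) (a : A) (i : Fin n) :
    (rAct s f a).1 (om i) = f.1 (om i) * (s i).symm a := by
  show f.1 (lmulPi a (om i)) = _
  rw [repr_lemma s f]
  have : ∀ j, f.1 (om j) * (s j).symm (lmulPi (k := k) a (om i) j)
      = if j = i then f.1 (om i) * (s i).symm a else 0 := by
    intro j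
    rcases eq_or_ne j i with rfl | h
    · simp [lmulPi, om]
    · simp [lmulPi, om, Pi.single_eq_of_ne h, h]
  simp_rw [this]
  simp

end Aux

/--
Let `(∂, σ)` be a right twisted multi-derivation with diagonal
`σ = diag(σ₁, …, σ_n)` given by algebra automorphisms, so
`∂_i(ab) = ∂_i(a)σ_i(b) + a∂_i(b)`.  Then `(∂, σ)` is free with
`σ̄ = diag(σ₁⁻¹, …, σ_n⁻¹)` and `σ̂ = σ`.  If in addition each `∂_i` is a
`q_i`-skew derivation, i.e. `σ_i⁻¹(∂_i(σ_i(a))) = q_i ∂_i(a)`, then the unique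
hom-connection `∇` with `∇(ξ_i) = 0` is given by `∇(f) = Σ_i q_i ∂_i(f(ω_i))`.
-/
theorem diagonal_case
    (del : Fin n → (A →ₗ[k] A))
    (hder : ∀ (a b : A) (i : Fin n),
      del i (a * b) = del i a * s i b + a * del i b)
    (q : Fin n → k)
    (hskew : ∀ (i : Fin n) (a : A), (s i).symm (del i (s i a)) = q i • del i a)
    (ξ : Fin n → homD s)
    (hξ : ∀ i j, (ξ i).1 (om j) = if i = j then (1 : A) else 0) :
    IsFreePair (diagAlg s) (diagAlg fun i => (s i).symm) (diagAlg s) ∧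
    (∃! nabla : homD s →ₗ[k] A, IsHomConnVanishing s del ξ nabla) ∧
    (∀ nabla : homD s →ₗ[k] A, IsHomConnVanishing s del ξ nabla →
      ∀ f : homD s, nabla f = ∑ i, q i • del i (f.1 (om i))) := by
  have hdel1 : ∀ i : Fin n, del i (1 : A) = 0 := by
    intro i
    have h := hder 1 1 i
    simp only [mul_one, one_mul, map_one] at h
    exact (right_eq_add.mp h)
  have hxi : ∀ (i : Fin n) (y : Fin n → A), (ξ i).1 y = (s i).symm (y i) := by
    intro i y
    rw [repr_lemma s (ξ i) y]
    simp_rw [hξ, ite_mul, one_mul, zero_mul]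
    simp
  have NV : ∀ (nabla : homD s →ₗ[k] A),
      (∀ f : homD s, nabla f = ∑ i, q i • del i (f.1 (om i))) →
      IsHomConnVanishing s del ξ nabla → True := fun _ _ _ => trivial
  -- the candidate hom-connection
  let N : homD s →ₗ[k] A :=
    { toFun := fun f => ∑ i, q i • del i (f.1 (om i))
      map_add' := by
        intro f g
        simp [Submodule.coe_add, LinearMap.add_apply, smul_add,
          Finset.sum_add_distrib]
      map_smul' := by
        intro c f
        simp [Submodule.coe_smul, LinearMap.smul_apply, Finset.smul_sum,
          smul_comm c] }
  have Napp : ∀ f : homD s, N f = ∑ i, q i • del i (f.1 (om i)) := fun _ => rfl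
  have hskew' : ∀ (i : Fin n) (a : A),
      (s i).symm (del i a) = q i • del i ((s i).symm a) := by
    intro i a
    have := hskew i ((s i).symm a)
    rwa [AlgEquiv.apply_symm_apply] at this
  have keyL : ∀ (f : homD s) (a : A),
      N (rAct s f a) = N f * a + f.1 (dvec del a) := by
    intro f a
    rw [Napp, Napp]
    have h1 : ∀ i, q i • del i ((rAct s f a).1 (om i))
        = (q i • del i (f.1 (om i))) * a + f.1 (om i) * (s i).symm (del i a) := by
      intro i
      rw [rAct_om, hder, AlgEquiv.apply_symm_apply, smul_add, smul_mul_assoc,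
        hskew' i a, mul_smul_comm]
    simp_rw [h1]
    rw [Finset.sum_add_distrib, ← Finset.sum_mul,
      repr_lemma s f (dvec del a)]
    rfl
  have keyV : ∀ i, N (ξ i) = 0 := by
    intro i
    rw [Napp]
    refine Finset.sum_eq_zero fun j _ => ?_
    rw [hξ]
    rcases eq_or_ne i j with rfl | h
    · simp [hdel1]
    · simp [h]
  have formula : ∀ nabla : homD s →ₗ[k] A, IsHomConnVanishing s del ξ nabla →
      ∀ f : homD s, nabla f = ∑ i, q i • del i (f.1 (om i)) := by
    rintro nabla ⟨hL, hV⟩ f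
    have hdecomp : f = ∑ i, rAct s (ξ i) (s i (f.1 (om i))) := by
      apply Subtype.ext
      apply LinearMap.ext
      intro x
      rw [repr_lemma s f x]
      have hcoe : ((↑(∑ i, rAct s (ξ i) (s i (f.1 (om i)))) :
          (Fin n → A) →ₗ[k] A)) = ∑ i, ((rAct s (ξ i) (s i (f.1 (om i)))).1) := by
        simp
      rw [hcoe, LinearMap.sum_apply]
      refine Finset.sum_congr rfl fun i _ => ?_
      show _ = (ξ i).1 (lmulPi (s i (f.1 (om i))) x)
      rw [hxi]
      show f.1 (om i) * (s i).symm (x i)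
        = (s i).symm (s i (f.1 (om i)) * x i)
      rw [map_mul, AlgEquiv.symm_apply_apply]
    calc nabla f = ∑ i, nabla (rAct s (ξ i) (s i (f.1 (om i)))) := by
          rw [← map_sum, ← hdecomp]
      _ = ∑ i, q i • del i (f.1 (om i)) := by
          refine Finset.sum_congr rfl fun i _ => ?_
          rw [hL, hV, zero_mul, zero_add, hxi]
          show (s i).symm (del i (s i (f.1 (om i)))) = _
          rw [hskew]
  refine ⟨⟨fun i j a => ?_, fun i j a => ?_, fun i j a => ?_, fun i j a => ?_⟩,
    ⟨N, ⟨keyL, keyV⟩, fun m hm => LinearMap.ext fun f => by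
      rw [formula m hm f, Napp]⟩, formula⟩ <;>
  · simp only [diagAlg_apply]
    rcases eq_or_ne i j with rfl | h
    · simp
    · simp [h, Ne.symm h]

end Stmt10
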